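/- Let d(z) = z√3 / sqrt((2+z)(6-5z)^3) and let s(z) be the unique analytic function near 0 with s(0) = 0 satisfying z·s'(z) = 4·d(z). Then s(z) = (1/2)(-1 + sqrt(2+z)/sqrt(2 - 5z/3)). -/

import Mathlib

open Real Filter

/-- The generating function of the limiting root-edge-origin degree distribution of random
planar maps. -/
noncomputable def dGF : ℝ → ℝ := fun z =>
  z * Real.sqrt 3 / Real.sqrt ((2 + z) * (6 - 5 * z) ^ 3)

open Topology

/-- Auxiliary: the function `4·d(z)/z`, extended continuously. -/
noncomputable def gfun : ℝ → ℝ := fun z =>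
  4 * Real.sqrt 3 / Real.sqrt ((2 + z) * (6 - 5 * z) ^ 3)

/-- Auxiliary: the claimed closed form. -/
noncomputable def tfun : ℝ → ℝ := fun z =>
  (1 / 2) * (-1 + Real.sqrt (2 + z) / Real.sqrt (2 - 5 * z / 3))

lemma tfun_deriv {z : ℝ} (hz : z ∈ Set.Ioo (-1 : ℝ) 1) :
    HasDerivAt tfun (gfun z) z := by
  obtain ⟨hz1, hz2⟩ := hz
  have hp : (0:ℝ) < 2 + z := by linarith
  have hq : (0:ℝ) < 2 - 5 * z / 3 := by linarith
  set a := Real.sqrt (2 + z) with ha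
  set b := Real.sqrt (2 - 5 * z / 3) with hb
  have hapos : 0 < a := Real.sqrt_pos.mpr hp
  have hbpos : 0 < b := Real.sqrt_pos.mpr hq
  have ha2 : a ^ 2 = 2 + z := Real.sq_sqrt hp.le
  have hb2 : b ^ 2 = 2 - 5 * z / 3 := Real.sq_sqrt hq.le
  have hu : HasDerivAt (fun z : ℝ => Real.sqrt (2 + z)) (1 / (2 * a)) z := by
    have h1 : HasDerivAt (fun z : ℝ => 2 + z) 1 z := by
      simpa using (hasDerivAt_id z).const_add 2
    exact ((Real.hasDerivAt_sqrt (ne_of_gt hp)).comp z h1).congr_deriv (by rw [ha]; ring)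
  have hv : HasDerivAt (fun z : ℝ => Real.sqrt (2 - 5 * z / 3)) (-(5/3) / (2 * b)) z := by
    have h1 : HasDerivAt (fun z : ℝ => 2 - 5 * z / 3) (-(5/3)) z := by
      have h2 := (((hasDerivAt_id z).const_mul (5:ℝ)).div_const 3).const_sub 2
      exact h2.congr_deriv (by ring)
    have h2 := (Real.hasDerivAt_sqrt (ne_of_gt hq)).comp z h1
    have hval : (-(5/3) : ℝ) / (2 * b) = 1 / (2 * Real.sqrt (2 - 5 * z / 3)) * (-(5/3)) := by
      rw [← hb]; ring
    rw [hval]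
    exact h2
  have hdiv := hu.div hv (ne_of_gt hbpos)
  have hmain := (hdiv.const_add (-1 : ℝ)).const_mul (1/2 : ℝ)
  have heq : (1/2 : ℝ) * ((1 / (2 * a) * b - a * (-(5/3) / (2 * b))) / b ^ 2) = gfun z := by
    have hsq : Real.sqrt ((2 + z) * (6 - 5 * z) ^ 3) = 3 * Real.sqrt 3 * a * b ^ 3 := by
      have h3 : (Real.sqrt 3) ^ 2 = 3 := Real.sq_sqrt (by norm_num)
      have hsqr : (3 * Real.sqrt 3 * a * b ^ 3) ^ 2 = (2 + z) * (6 - 5 * z) ^ 3 := by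
        have : (3 * Real.sqrt 3 * a * b ^ 3) ^ 2
            = 9 * (Real.sqrt 3) ^ 2 * a ^ 2 * (b ^ 2) ^ 3 := by ring
        rw [this, h3, ha2, hb2]; ring
      rw [← hsqr, Real.sqrt_sq (by positivity)]
    rw [gfun, hsq]
    field_simp
    linear_combination 3 * hb2 + 5 * ha2
  rw [← heq]
  exact hmain

lemma gfun_cont : ContinuousAt gfun 0 := by
  apply ContinuousAt.div
  · fun_prop
  · exact (Real.continuous_sqrt.comp (by fun_prop)).continuousAt
  · rw [Real.sqrt_ne_zero']
    norm_num

/-- If `s` is analytic near `0` with `s(0) = 0` and `z·s'(z) = 4·d(z)` near `0`, then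
`s(z) = (1/2)(-1 + sqrt(2+z)/sqrt(2-5z/3))` near `0`. -/
theorem vertex_degree_gf (s : ℝ → ℝ) (hs : AnalyticAt ℝ s 0) (h0 : s 0 = 0)
    (hode : ∀ᶠ z in nhds (0 : ℝ), z * deriv s z = 4 * dGF z) :
    ∀ᶠ z in nhds (0 : ℝ),
      s z = (1 / 2) * (-1 + Real.sqrt (2 + z) / Real.sqrt (2 - 5 * z / 3)) := by
  -- off zero, deriv s = gfun
  have hoff : ∀ᶠ z in nhds (0 : ℝ), z ≠ 0 → deriv s z = gfun z := by
    filter_upwards [hode] with z hz hz0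
    have : z * deriv s z = z * gfun z := by
      rw [hz]; simp only [dGF, gfun]; ring
    exact mul_left_cancel₀ hz0 this
  -- continuity of deriv s at 0
  have hdc : ContinuousAt (deriv s) 0 := by
    have h1 : ContinuousAt (fderiv ℝ s) 0 := hs.fderiv.continuousAt
    have h2 : ContinuousAt (fun z => fderiv ℝ s z 1) 0 :=
      ((ContinuousLinearMap.apply ℝ ℝ (1:ℝ)).continuous.continuousAt).comp h1
    simpa [fderiv_apply_one_eq_deriv] using h2
  -- deriv s 0 = gfun 0
  have hzero : deriv s 0 = gfun 0 := by
    have hne : (𝓝[≠] (0:ℝ)).NeBot := by infer_instance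
    have h1 : Tendsto (deriv s) (𝓝[≠] (0:ℝ)) (𝓝 (deriv s 0)) :=
      hdc.continuousWithinAt.tendsto
    have h2 : Tendsto (deriv s) (𝓝[≠] (0:ℝ)) (𝓝 (gfun 0)) := by
      have heq : deriv s =ᶠ[𝓝[≠] (0:ℝ)] gfun := by
        filter_upwards [eventually_nhdsWithin_of_eventually_nhds hoff,
          self_mem_nhdsWithin] with z h hz using h hz
      exact (gfun_cont.continuousWithinAt.tendsto).congr' heq.symm
    exact tendsto_nhds_unique h1 h2
  have hall : ∀ᶠ z in nhds (0 : ℝ), deriv s z = gfun z := by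
    filter_upwards [hoff] with z hz
    rcases eq_or_ne z 0 with rfl | h
    · exact hzero
    · exact hz h
  have hdiff : ∀ᶠ z in nhds (0 : ℝ), DifferentiableAt ℝ s z :=
    hs.eventually_analyticAt.mono fun z hz => hz.differentiableAt
  -- get a ball
  obtain ⟨r, hr, hball⟩ := Metric.eventually_nhds_iff_ball.mp (hall.and hdiff)
  set ρ := min r 1 with hρ
  have hρpos : 0 < ρ := lt_min hr one_pos
  have hsub : Set.Ioo (-ρ) ρ ⊆ Metric.ball (0:ℝ) r := by
    intro x hx
    rw [Metric.mem_ball, Real.dist_eq, sub_zero, abs_lt]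
    constructor <;> [nlinarith [hx.1, min_le_left r 1]; nlinarith [hx.2, min_le_left r 1]]
  have hsub1 : Set.Ioo (-ρ) ρ ⊆ Set.Ioo (-1 : ℝ) 1 := by
    intro x hx
    constructor <;> [nlinarith [hx.1, min_le_right r 1]; nlinarith [hx.2, min_le_right r 1]]
  -- s - tfun is constant on the interval
  have key : ∀ x ∈ Set.Ioo (-ρ) ρ, s x - tfun x = s 0 - tfun 0 := by
    intro x hx
    have hconv : Convex ℝ (Set.Ioo (-ρ) ρ) := convex_Ioo _ _
    have hd : ∀ y ∈ Set.Ioo (-ρ) ρ, HasDerivAt (fun w => s w - tfun w) 0 y := by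
      intro y hy
      obtain ⟨h1, h2⟩ := hball y (hsub hy)
      have hsy : HasDerivAt s (gfun y) y := h1 ▸ h2.hasDerivAt
      exact (hsy.sub (tfun_deriv (hsub1 hy))).congr_deriv (sub_self _)
    have h0m : (0:ℝ) ∈ Set.Ioo (-ρ) ρ := by constructor <;> simp [hρpos, neg_lt_zero.mpr hρpos]
    apply hconv.is_const_of_fderivWithin_eq_zero
      (fun y hy => ((hd y hy).differentiableAt).differentiableWithinAt) _ hx h0m
    intro y hy
    rw [fderivWithin_eq_fderiv (isOpen_Ioo.uniqueDiffOn _ hy) (hd y hy).differentiableAt]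
    rw [(hd y hy).hasFDerivAt.fderiv]
    ext x
    simp
  have ht0 : tfun 0 = 0 := by
    simp [tfun]
  rw [Metric.eventually_nhds_iff_ball]
  refine ⟨ρ, hρpos, fun x hx => ?_⟩
  have hx' : x ∈ Set.Ioo (-ρ) ρ := by
    rw [Metric.mem_ball, Real.dist_eq, sub_zero, abs_lt] at hx
    exact ⟨hx.1, hx.2⟩
  have hkx := key x hx'
  rw [h0, ht0] at hkx
  have hst : s x = tfun x := by linarith [hkx]
  simpa [tfun] using hst
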